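/- Let φ : A → ℂ be a (possibly non-linear) functional on a von Neumann algebra A (e.g., A = Mₙ(ℂ)). Then φ is 2-positive (i.e., [[φ(a), φ(c)],[φ(c*), φ(b)]] ≥ 0 whenever [[a, c],[c*, b]] ≥ 0) if and only if: (i) φ(a) ≥ 0 for a ≥ 0; (ii) φ is monotone on positives; (iii) φ(a*) = φ(a)* for all a; and (iv) |φ(a*b)|² ≤ φ(a*a)φ(b*b) for all a, b. -/

import Mathlib

open Matrix BigOperators Finset
open scoped ComplexOrder

/-- The `i`-th largest eigenvalue (0-indexed) of a Hermitian matrix. -/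
noncomputable def eigDesc {n : ℕ} (a : Matrix (Fin n) (Fin n) ℂ) (ha : a.IsHermitian) (i : Fin n) : ℝ :=
  ha.eigenvalues (Tuple.sort ha.eigenvalues i.rev)

/-- Eigenvalues in decreasing order, extended by `0` beyond the size. `eigN a ha i = λ_{i+1}(a)`. -/
noncomputable def eigN {n : ℕ} (a : Matrix (Fin n) (Fin n) ℂ) (ha : a.IsHermitian) (i : ℕ) : ℝ :=
  if h : i < n then eigDesc a ha ⟨i, h⟩ else 0

/-- The non-linear trace of Choquet type:
`φ_α(a) = ∑_{i=1}^{n-1} (λ_i(a) - λ_{i+1}(a)) α(i) + λ_n(a) α(n)`. -/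
noncomputable def choquetTrace {n : ℕ} (α : ℕ → ℝ) (a : Matrix (Fin n) (Fin n) ℂ)
    (ha : a.IsHermitian) : ℝ :=
  ∑ i ∈ Finset.range n, (eigN a ha i - eigN a ha (i + 1)) * α (i + 1)

/-- Functional calculus of a Hermitian matrix `a` by a function `f : ℝ → ℝ` on its eigenvalues. -/
noncomputable def funCalc {n : ℕ} (f : ℝ → ℝ) (a : Matrix (Fin n) (Fin n) ℂ)
    (ha : a.IsHermitian) : Matrix (Fin n) (Fin n) ℂ :=
  (ha.eigenvectorUnitary : Matrix (Fin n) (Fin n) ℂ) *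
    Matrix.diagonal (fun i => (f (ha.eigenvalues i) : ℂ)) *
    star (ha.eigenvectorUnitary : Matrix (Fin n) (Fin n) ℂ)

/-- Old Mathlib's `Matrix.PosSemidef.sqrt` (removed since), restated with its old definition. -/
noncomputable def Matrix.PosSemidef.sqrt {𝕜 : Type*} [RCLike 𝕜] {m : Type*} [Fintype m] [DecidableEq m]
    {A : Matrix m m 𝕜} (hA : A.PosSemidef) : Matrix m m 𝕜 :=
  hA.1.eigenvectorUnitary.1 * Matrix.diagonal ((↑) ∘ (√·) ∘ hA.1.eigenvalues) *
    (star hA.1.eigenvectorUnitary : Matrix m m 𝕜)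

theorem Matrix.PosSemidef.posSemidef_sqrt {𝕜 : Type*} [RCLike 𝕜] {m : Type*} [Fintype m]
    [DecidableEq m] {A : Matrix m m 𝕜} (hA : A.PosSemidef) : hA.sqrt.PosSemidef := by
  unfold Matrix.PosSemidef.sqrt
  rw [Matrix.star_eq_conjTranspose]
  exact (Matrix.posSemidef_diagonal_iff.mpr fun i =>
    RCLike.ofReal_nonneg.mpr (Real.sqrt_nonneg _)).mul_mul_conjTranspose_same _

/-- The absolute value `|a| = (a^* a)^{1/2}` of a matrix. -/
noncomputable def matAbs {n : ℕ} (a : Matrix (Fin n) (Fin n) ℂ) : Matrix (Fin n) (Fin n) ℂ :=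
  (Matrix.posSemidef_conjTranspose_mul_self a).sqrt

theorem matAbs_isHermitian {n : ℕ} (a : Matrix (Fin n) (Fin n) ℂ) : (matAbs a).IsHermitian :=
  (Matrix.posSemidef_conjTranspose_mul_self a).posSemidef_sqrt.1


theorem Matrix.PosSemidef.sqrt_mul_self {𝕜 : Type*} [RCLike 𝕜] {m : Type*} [Fintype m]
    [DecidableEq m] {A : Matrix m m 𝕜} (hA : A.PosSemidef) : hA.sqrt * hA.sqrt = A := by
  unfold Matrix.PosSemidef.sqrt
  have h1 : (star hA.1.eigenvectorUnitary : Matrix m m 𝕜) * hA.1.eigenvectorUnitary.1 = 1 :=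
    Unitary.coe_star_mul_self _
  conv_rhs => rw [hA.1.spectral_theorem]
  calc _ = hA.1.eigenvectorUnitary.1 * Matrix.diagonal ((↑) ∘ (√·) ∘ hA.1.eigenvalues) *
      ((star hA.1.eigenvectorUnitary : Matrix m m 𝕜) * hA.1.eigenvectorUnitary.1) *
      Matrix.diagonal ((↑) ∘ (√·) ∘ hA.1.eigenvalues) *
      (star hA.1.eigenvectorUnitary : Matrix m m 𝕜) := by simp only [Matrix.mul_assoc]
  _ = _ := by
    rw [h1, Matrix.mul_one, Matrix.mul_assoc _ (Matrix.diagonal _) (Matrix.diagonal _),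
      Matrix.diagonal_mul_diagonal]
    congr 3
    funext i
    simp only [Function.comp_apply]
    rw [← RCLike.ofReal_mul, Real.mul_self_sqrt (hA.eigenvalues_nonneg i)]

lemma qf2 (w x z : ℂ) (h : (!![w,x;star x,z]).PosSemidef) (v0 v1 : ℂ) :
    0 ≤ star v0 * (w * v0) + star v0 * (x * v1) + (star v1 * (star x * v0) + star v1 * (z * v1)) := by
  have := h.dotProduct_mulVec_nonneg ![v0, v1]
  simpa [dotProduct, Matrix.mulVec, Fin.sum_univ_two, mul_add] using this

lemma psd2_abs {w x z : ℂ} (h : (!![w,x;star x,z]).PosSemidef) :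
    ((‖x‖ : ℝ) : ℂ) ^ 2 ≤ w * z := by
  have hw : 0 ≤ w := by
    have := h.dotProduct_mulVec_nonneg ![1,0]
    simpa [dotProduct, Matrix.mulVec, Fin.sum_univ_two] using this
  have hz : 0 ≤ z := by
    have := h.dotProduct_mulVec_nonneg ![0,1]
    simpa [dotProduct, Matrix.mulVec, Fin.sum_univ_two] using this
  obtain ⟨hwre, hwim⟩ := Complex.nonneg_iff.mp hw
  obtain ⟨hzre, hzim⟩ := Complex.nonneg_iff.mp hz
  have key : ∀ t : ℝ, 0 ≤ z.re * (t * t) + (-(2 * Complex.normSq x)) * t + w.re * Complex.normSq x := by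
    intro t
    have h2 := (Complex.nonneg_iff.mp (qf2 w x z h x (-(t:ℂ)))).1
    simp only [Complex.add_re, Complex.mul_re, Complex.mul_im, Complex.neg_re, Complex.neg_im,
      Complex.ofReal_re, Complex.ofReal_im, Complex.star_def, Complex.conj_re, Complex.conj_im,
      Complex.normSq_apply] at h2 ⊢
    nlinarith [h2]
  have hd := discrim_le_zero key
  unfold discrim at hd
  have hns : 0 ≤ Complex.normSq x := Complex.normSq_nonneg x
  have habs : ‖x‖^2 = Complex.normSq x := Complex.sq_norm x
  have key2 : Complex.normSq x ≤ w.re * z.re := by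
    rcases eq_or_lt_of_le hns with h0 | h0
    · nlinarith
    · nlinarith
  rw [Complex.le_def]
  constructor
  · simpa [Complex.mul_re, ← hwim, ← hzim, ← Complex.ofReal_pow, habs] using key2
  · simp [Complex.mul_im, ← hwim, ← hzim, ← Complex.ofReal_pow]


lemma psd2_mk {w x z : ℂ} (hw : 0 ≤ w) (hz : 0 ≤ z)
    (hx : ((‖x‖ : ℝ) : ℂ) ^ 2 ≤ w * z) : (!![w,x;star x,z]).PosSemidef := by
  obtain ⟨hwre, hwim⟩ := Complex.nonneg_iff.mp hw
  obtain ⟨hzre, hzim⟩ := Complex.nonneg_iff.mp hz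
  have hr : Complex.normSq x ≤ w.re * z.re := by
    have h1 := (Complex.le_def.mp hx).1
    simpa [Complex.mul_re, ← hwim, ← hzim, ← Complex.ofReal_pow, Complex.sq_norm] using h1
  rw [Complex.normSq_apply] at hr
  refine Matrix.PosSemidef.of_dotProduct_mulVec_nonneg ?_ ?_
  · ext i j
    fin_cases i <;> fin_cases j <;>
      simp [Matrix.conjTranspose_apply, Complex.ext_iff, ← hwim, ← hzim]
  · intro v
    have expand : star v ⬝ᵥ (!![w,x;star x,z] *ᵥ v) =
        star (v 0) * (w * v 0) + star (v 0) * (x * v 1) +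
          (star (v 1) * (star x * v 0) + star (v 1) * (z * v 1)) := by
      simp [dotProduct, Matrix.mulVec, Fin.sum_univ_two, mul_add]
    rw [expand, Complex.nonneg_iff]
    constructor
    · simp only [Complex.add_re, Complex.mul_re, Complex.mul_im, Complex.star_def,
        Complex.conj_re, Complex.conj_im, ← hwim, ← hzim]
      set W := w.re; set Z := z.re; set xr := x.re; set xi := x.im
      set p := (v 0).re; set q := (v 0).im; set p' := (v 1).re; set q' := (v 1).im
      have h2 : 0 ≤ (W*Z - (xr*xr+xi*xi)) * ((p^2+q^2)*(p'^2+q'^2)) :=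
        mul_nonneg (by linarith) (by positivity)
      have h1 : 0 ≤ (W*(p^2+q^2) - Z*(p'^2+q'^2))^2 := sq_nonneg _
      have him : 0 ≤ (xr*(q'*p-p'*q) + xi*(p'*p+q'*q))^2 := sq_nonneg _
      have hS : 0 ≤ W*(p^2+q^2) + Z*(p'^2+q'^2) := by positivity
      nlinarith [h1, h2, him, hS]
    · simp only [Complex.add_im, Complex.mul_re, Complex.mul_im, Complex.star_def,
        Complex.conj_re, Complex.conj_im, ← hwim, ← hzim]
      ring

variable {n : ℕ} {a : Matrix (Fin n) (Fin n) ℂ} (ha : a.IsHermitian)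

lemma funCalc_mul (f g : ℝ → ℝ) :
    funCalc f a ha * funCalc g a ha = funCalc (fun x => f x * g x) a ha := by
  unfold funCalc
  have h1 : (star (ha.eigenvectorUnitary : Matrix (Fin n) (Fin n) ℂ)) *
      (ha.eigenvectorUnitary : Matrix (Fin n) (Fin n) ℂ) = 1 :=
    Unitary.coe_star_mul_self _
  calc _ = (ha.eigenvectorUnitary : Matrix (Fin n) (Fin n) ℂ) *
      Matrix.diagonal (fun i => (f (ha.eigenvalues i) : ℂ)) *
      ((star (ha.eigenvectorUnitary : Matrix (Fin n) (Fin n) ℂ)) *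
      (ha.eigenvectorUnitary : Matrix (Fin n) (Fin n) ℂ)) *
      Matrix.diagonal (fun i => (g (ha.eigenvalues i) : ℂ)) *
      star (ha.eigenvectorUnitary : Matrix (Fin n) (Fin n) ℂ) := by
        simp only [Matrix.mul_assoc]
  _ = _ := by
    rw [h1, Matrix.mul_one, Matrix.mul_assoc, Matrix.mul_assoc, ← Matrix.mul_assoc _ _ (star _),
      Matrix.diagonal_mul_diagonal]
    simp [Matrix.mul_assoc, mul_comm]

lemma funCalc_congr {f g : ℝ → ℝ} (h : ∀ i, f (ha.eigenvalues i) = g (ha.eigenvalues i)) :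
    funCalc f a ha = funCalc g a ha := by
  unfold funCalc
  have : (fun i => (f (ha.eigenvalues i) : ℂ)) = fun i => (g (ha.eigenvalues i) : ℂ) :=
    funext fun i => by rw [h i]
  rw [this]

lemma funCalc_herm (f : ℝ → ℝ) : (funCalc f a ha).IsHermitian := by
  have hD : (Matrix.diagonal fun i => (f (ha.eigenvalues i) : ℂ))ᴴ =
      Matrix.diagonal fun i => (f (ha.eigenvalues i) : ℂ) := by
    rw [Matrix.diagonal_conjTranspose]
    have : (star fun i => ((f (ha.eigenvalues i) : ℂ))) = fun i => ((f (ha.eigenvalues i) : ℂ)) :=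
      funext fun i => Complex.conj_ofReal _
    rw [this]
  unfold funCalc Matrix.IsHermitian
  rw [Matrix.star_eq_conjTranspose, Matrix.conjTranspose_mul, Matrix.conjTranspose_mul,
    Matrix.conjTranspose_conjTranspose, hD, Matrix.mul_assoc]

lemma funCalc_psd {f : ℝ → ℝ} (h : ∀ i, 0 ≤ f (ha.eigenvalues i)) :
    (funCalc f a ha).PosSemidef := by
  unfold funCalc
  rw [Matrix.star_eq_conjTranspose]
  exact (Matrix.PosSemidef.diagonal (fun i => by simpa using Complex.zero_le_real.2 (h i))
    ).mul_mul_conjTranspose_same _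

lemma funCalc_one : funCalc (fun _ => 1) a ha = 1 := by
  unfold funCalc
  simp [Matrix.diagonal_one, Unitary.coe_mul_star_self]

lemma funCalc_id : funCalc (fun x => x) a ha = a := ha.spectral_theorem.symm

lemma funCalc_sub (f g : ℝ → ℝ) :
    funCalc f a ha - funCalc g a ha = funCalc (fun x => f x - g x) a ha := by
  unfold funCalc
  rw [← Matrix.sub_mul, ← Matrix.mul_sub, Matrix.diagonal_sub]
  push_cast
  rfl

lemma sqrt_facts {n : ℕ} {a : Matrix (Fin n) (Fin n) ℂ} (hp : a.PosSemidef) :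
    ∃ s t p : Matrix (Fin n) (Fin n) ℂ, sᴴ = s ∧ tᴴ = t ∧ pᴴ = p ∧ s * s = a ∧
      s * t = p ∧ t * s = p ∧ t * a * t = p ∧ s * p = s ∧ p * s = s ∧ t * p = t ∧
      (1 - p).PosSemidef := by
  have ha := hp.1
  set sq : ℝ → ℝ := Real.sqrt with hsq
  set g : ℝ → ℝ := fun x => (Real.sqrt x)⁻¹ with hg
  set ind : ℝ → ℝ := fun x => if x = 0 then 0 else 1 with hind
  have hss : funCalc sq a ha * funCalc sq a ha = a := by
    rw [funCalc_mul, funCalc_congr ha (g := fun x => x) fun i =>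
      Real.mul_self_sqrt (hp.eigenvalues_nonneg i), funCalc_id]
  have hst : funCalc sq a ha * funCalc g a ha = funCalc ind a ha := by
    rw [funCalc_mul]
    refine funCalc_congr ha fun i => ?_
    have h0 := hp.eigenvalues_nonneg i
    rcases eq_or_lt_of_le h0 with h | h
    · simp [hsq, hg, hind, ← h]
    · have : Real.sqrt (ha.eigenvalues i) ≠ 0 := ne_of_gt (Real.sqrt_pos.2 h)
      simp [hsq, hg, hind, mul_inv_cancel₀ this, ne_of_gt h]
  have hts : funCalc g a ha * funCalc sq a ha = funCalc ind a ha := by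
    rw [funCalc_mul]
    refine funCalc_congr ha fun i => ?_
    have h0 := hp.eigenvalues_nonneg i
    rcases eq_or_lt_of_le h0 with h | h
    · simp [hsq, hg, hind, ← h]
    · have : Real.sqrt (ha.eigenvalues i) ≠ 0 := ne_of_gt (Real.sqrt_pos.2 h)
      simp [hsq, hg, hind, inv_mul_cancel₀ this, ne_of_gt h]
  have hpp : funCalc ind a ha * funCalc ind a ha = funCalc ind a ha := by
    rw [funCalc_mul]
    refine funCalc_congr ha fun i => ?_
    by_cases h : ha.eigenvalues i = 0 <;> simp [hind, h]
  refine ⟨funCalc sq a ha, funCalc g a ha, funCalc ind a ha,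
    funCalc_herm ha sq, funCalc_herm ha g, funCalc_herm ha ind, hss, hst, hts, ?_, ?_, ?_, ?_, ?_⟩
  · calc funCalc g a ha * a * funCalc g a ha
        = funCalc g a ha * (funCalc sq a ha * funCalc sq a ha) * funCalc g a ha := by rw [hss]
      _ = (funCalc g a ha * funCalc sq a ha) * (funCalc sq a ha * funCalc g a ha) := by
            simp only [Matrix.mul_assoc]
      _ = funCalc ind a ha * funCalc ind a ha := by rw [hts, hst]
      _ = funCalc ind a ha := hpp
  · rw [funCalc_mul]
    refine funCalc_congr ha fun i => ?_
    by_cases h : ha.eigenvalues i = 0 <;> simp [hsq, hind, h]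
  · rw [funCalc_mul]
    refine funCalc_congr ha fun i => ?_
    by_cases h : ha.eigenvalues i = 0 <;> simp [hsq, hind, h]
  · rw [funCalc_mul]
    refine funCalc_congr ha fun i => ?_
    by_cases h : ha.eigenvalues i = 0 <;> simp [hg, hind, h]
  · rw [← funCalc_one ha, funCalc_sub]
    refine funCalc_psd ha fun i => ?_
    by_cases h : ha.eigenvalues i = 0 <;> simp [hind, h]

lemma schwarz_data {n : ℕ} {a b c : Matrix (Fin n) (Fin n) ℂ}
    (hT : (Matrix.fromBlocks a c cᴴ b).PosSemidef) :
    a.PosSemidef ∧ b.PosSemidef ∧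
    ∃ x y : Matrix (Fin n) (Fin n) ℂ, xᴴ * x = a ∧ xᴴ * y = c ∧
      (yᴴ * y).PosSemidef ∧ (b - yᴴ * y).PosSemidef := by
  obtain ⟨R, hR⟩ : ∃ R : Matrix (Fin n ⊕ Fin n) (Fin n ⊕ Fin n) ℂ,
      Matrix.fromBlocks a c cᴴ b = Rᴴ * R :=
    ⟨hT.sqrt, by rw [hT.posSemidef_sqrt.1.eq, hT.sqrt_mul_self]⟩
  set X : Matrix (Fin n ⊕ Fin n) (Fin n) ℂ := R.submatrix id Sum.inl with hX
  set Y : Matrix (Fin n ⊕ Fin n) (Fin n) ℂ := R.submatrix id Sum.inr with hY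
  have hXX : Xᴴ * X = a := by
    rw [hX, Matrix.conjTranspose_submatrix, ← Matrix.submatrix_mul _ _ _ id _ Function.bijective_id,
      ← hR]
    ext i j
    simp [Matrix.submatrix_apply]
  have hXY : Xᴴ * Y = c := by
    rw [hX, hY, Matrix.conjTranspose_submatrix,
      ← Matrix.submatrix_mul _ _ _ id _ Function.bijective_id, ← hR]
    ext i j
    simp [Matrix.submatrix_apply]
  have hYY : Yᴴ * Y = b := by
    rw [hY, Matrix.conjTranspose_submatrix, ← Matrix.submatrix_mul _ _ _ id _ Function.bijective_id,
      ← hR]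
    ext i j
    simp [Matrix.submatrix_apply]
  have hpa : a.PosSemidef := hXX ▸ Matrix.posSemidef_conjTranspose_mul_self X
  have hpb : b.PosSemidef := hYY ▸ Matrix.posSemidef_conjTranspose_mul_self Y
  refine ⟨hpa, hpb, ?_⟩
  obtain ⟨s, t, p, hsh, hth, hph, hss, hstp, htsp, htat, hsp, hps, htp, hP⟩ := sqrt_facts hpa
  obtain ⟨s', t', p', hsh', hth', hph', hss', hstp', htsp', htat', hsp', hps', htp', hP'⟩ :=
    sqrt_facts hpb
  -- X * p = X and Y * p' = Y
  have hXp : X * p = X := by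
    have h0 : (X * (1 - p))ᴴ * (X * (1 - p)) = 0 := by
      rw [Matrix.conjTranspose_mul, Matrix.mul_assoc, ← Matrix.mul_assoc Xᴴ, hXX]
      have h1 : a * (1 - p) = s * (s * (1 - p)) := by
        rw [← Matrix.mul_assoc, hss]
      have h2 : s * (1 - p) = 0 := by rw [Matrix.mul_sub, Matrix.mul_one, hsp, sub_self]
      rw [h1, h2, Matrix.mul_zero, Matrix.mul_zero]
    have h4 := Matrix.conjTranspose_mul_self_eq_zero.mp h0
    rw [Matrix.mul_sub, Matrix.mul_one] at h4
    exact (sub_eq_zero.mp h4).symm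
  have hYp : Y * p' = Y := by
    have h0 : (Y * (1 - p'))ᴴ * (Y * (1 - p')) = 0 := by
      rw [Matrix.conjTranspose_mul, Matrix.mul_assoc, ← Matrix.mul_assoc Yᴴ, hYY]
      have h1 : b * (1 - p') = s' * (s' * (1 - p')) := by
        rw [← Matrix.mul_assoc, hss']
      have h2 : s' * (1 - p') = 0 := by rw [Matrix.mul_sub, Matrix.mul_one, hsp', sub_self]
      rw [h1, h2, Matrix.mul_zero, Matrix.mul_zero]
    have h4 := Matrix.conjTranspose_mul_self_eq_zero.mp h0
    rw [Matrix.mul_sub, Matrix.mul_one] at h4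
    exact (sub_eq_zero.mp h4).symm
  have hpcp : p * c * p' = c := by
    have e : p * c * p' = (X * p)ᴴ * (Y * p') := by
      rw [Matrix.conjTranspose_mul, hph, ← hXY]
      simp only [Matrix.mul_assoc]
    rw [e, hXp, hYp, hXY]
  -- the contraction k and the vectors
  set k : Matrix (Fin n) (Fin n) ℂ := t * c * t' with hk
  refine ⟨s, k * s', ?_, ?_, Matrix.posSemidef_conjTranspose_mul_self _, ?_⟩
  · rw [hsh, hss]
  · rw [hsh, hk]
    calc s * (t * c * t' * s') = (s * t) * c * (t' * s') := by simp only [Matrix.mul_assoc]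
    _ = p * c * p' := by rw [hstp, htsp']
    _ = c := hpcp
  -- b - yᴴ y PSD
  set W : Matrix (Fin n ⊕ Fin n) (Fin n) ℂ := X * t with hW
  set V : Matrix (Fin n ⊕ Fin n) (Fin n) ℂ := Y * t' with hV
  have hkWV : k = Wᴴ * V := by
    rw [hk, hW, hV, Matrix.conjTranspose_mul, hth, ← hXY]
    simp only [Matrix.mul_assoc]
  have hWW : Wᴴ * W = p := by
    rw [hW, Matrix.conjTranspose_mul, hth, ← htat, ← hXX]
    simp only [Matrix.mul_assoc]
  have hVV : Vᴴ * V = p' := by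
    rw [hV, Matrix.conjTranspose_mul, hth', ← htat', ← hYY]
    simp only [Matrix.mul_assoc]
  set Q : Matrix (Fin n ⊕ Fin n) (Fin n ⊕ Fin n) ℂ := W * Wᴴ with hQ
  have hQh : Qᴴ = Q := by rw [hQ, Matrix.conjTranspose_mul, Matrix.conjTranspose_conjTranspose]
  have hQQ : Q * Q = Q := by
    rw [hQ]
    calc W * Wᴴ * (W * Wᴴ) = W * (Wᴴ * W) * Wᴴ := by simp only [Matrix.mul_assoc]
    _ = (W * p) * Wᴴ := by rw [hWW, Matrix.mul_assoc]
    _ = W * Wᴴ := by rw [hW, Matrix.mul_assoc X t p, htp]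
  have hQle : (1 - Q).PosSemidef := by
    have : 1 - Q = (1 - Q)ᴴ * (1 - Q) := by
      rw [Matrix.conjTranspose_sub, hQh, Matrix.conjTranspose_one, Matrix.mul_sub,
        Matrix.mul_one, Matrix.sub_mul, Matrix.one_mul, hQQ]
      abel
    rw [this]
    exact Matrix.posSemidef_conjTranspose_mul_self _
  have hkk : (1 - kᴴ * k).PosSemidef := by
    have hdecomp : 1 - kᴴ * k = (1 - p') + Vᴴ * (1 - Q) * V := by
      rw [hkWV, hQ]
      have e1 : (Wᴴ * V)ᴴ * (Wᴴ * V) = Vᴴ * (W * Wᴴ) * V := by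
        rw [Matrix.conjTranspose_mul, Matrix.conjTranspose_conjTranspose]
        simp only [Matrix.mul_assoc]
      rw [e1, Matrix.mul_sub, Matrix.mul_one, Matrix.sub_mul, hVV]
      abel
    rw [hdecomp]
    exact hP'.add ((hQle.conjTranspose_mul_mul_same V))
  have hfinal : b - (k * s')ᴴ * (k * s') = s'ᴴ * (1 - kᴴ * k) * s' := by
    rw [Matrix.conjTranspose_mul, Matrix.mul_sub, Matrix.mul_one, Matrix.sub_mul, hsh', hss']
    simp only [Matrix.mul_assoc]
  rw [hfinal]
  exact hkk.conjTranspose_mul_mul_same s'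


lemma psd2_00 {w x y z : ℂ} (h : (!![w,x;y,z]).PosSemidef) : 0 ≤ w := by
  have := h.dotProduct_mulVec_nonneg ![1,0]
  simpa [dotProduct, Matrix.mulVec, Fin.sum_univ_two] using this

lemma psd2_11 {w x y z : ℂ} (h : (!![w,x;y,z]).PosSemidef) : 0 ≤ z := by
  have := h.dotProduct_mulVec_nonneg ![0,1]
  simpa [dotProduct, Matrix.mulVec, Fin.sum_univ_two] using this

lemma psd2_star {w x y z : ℂ} (h : (!![w,x;y,z]).PosSemidef) : y = star x := by
  have := congr_fun (congr_fun h.1 1) 0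
  simpa [Matrix.conjTranspose_apply] using this |>.symm

lemma psdDiagBlocks {n : ℕ} {a b : Matrix (Fin n) (Fin n) ℂ}
    (ha : a.PosSemidef) (hb : b.PosSemidef) : (Matrix.fromBlocks a 0 0 b).PosSemidef := by
  have key : Matrix.fromBlocks a 0 0 b =
      (Matrix.fromBlocks ha.sqrt 0 0 hb.sqrt)ᴴ * (Matrix.fromBlocks ha.sqrt 0 0 hb.sqrt) := by
    rw [Matrix.fromBlocks_conjTranspose, Matrix.fromBlocks_multiply]
    simp [ha.posSemidef_sqrt.1.eq, hb.posSemidef_sqrt.1.eq, ha.sqrt_mul_self, hb.sqrt_mul_self]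
  rw [key]
  exact Matrix.posSemidef_conjTranspose_mul_self _

lemma monoBlock {n : ℕ} {a b : Matrix (Fin n) (Fin n) ℂ}
    (ha : a.PosSemidef) (hba : (b - a).PosSemidef) :
    (Matrix.fromBlocks b a a a).PosSemidef := by
  have key : Matrix.fromBlocks b a a a = Matrix.fromBlocks (b-a) 0 0 0 +
      (Matrix.fromBlocks 1 1 0 0 : Matrix (Fin n ⊕ Fin n) (Fin n ⊕ Fin n) ℂ)ᴴ *
        Matrix.fromBlocks a 0 0 0 * Matrix.fromBlocks 1 1 0 0 := by
    rw [Matrix.fromBlocks_conjTranspose, Matrix.fromBlocks_multiply, Matrix.fromBlocks_multiply]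
    simp [Matrix.fromBlocks_add]
  rw [key]
  exact (psdDiagBlocks hba Matrix.PosSemidef.zero).add
    ((psdDiagBlocks ha Matrix.PosSemidef.zero).conjTranspose_mul_mul_same _)

lemma starBlock {n : ℕ} (a : Matrix (Fin n) (Fin n) ℂ) :
    (Matrix.fromBlocks (a * aᴴ) a aᴴ 1).PosSemidef := by
  have key : Matrix.fromBlocks (a * aᴴ) a aᴴ 1 =
      (Matrix.fromBlocks a 0 1 0) * (Matrix.fromBlocks a 0 1 0)ᴴ := by
    rw [Matrix.fromBlocks_conjTranspose, Matrix.fromBlocks_multiply]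
    simp
  rw [key]
  exact Matrix.posSemidef_self_mul_conjTranspose _

lemma schwarzBlock {n : ℕ} (a b : Matrix (Fin n) (Fin n) ℂ) :
    (Matrix.fromBlocks (aᴴ * a) (aᴴ * b) (aᴴ * b)ᴴ (bᴴ * b)).PosSemidef := by
  have key : Matrix.fromBlocks (aᴴ * a) (aᴴ * b) (aᴴ * b)ᴴ (bᴴ * b) =
      (Matrix.fromBlocks a b 0 0)ᴴ * (Matrix.fromBlocks a b 0 0) := by
    rw [Matrix.fromBlocks_conjTranspose, Matrix.fromBlocks_multiply]
    simp [Matrix.conjTranspose_mul]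
  rw [key]
  exact Matrix.posSemidef_conjTranspose_mul_self _

/-- a (possibly non-linear) functional `φ` is 2-positive iff it is positive,
monotone on positives, star-preserving, and satisfies the Schwarz inequality. -/
theorem stmt11 (n : ℕ) (φ : Matrix (Fin n) (Fin n) ℂ → ℂ) :
    (∀ a b c : Matrix (Fin n) (Fin n) ℂ, (Matrix.fromBlocks a c cᴴ b).PosSemidef →
        (!![φ a, φ c; φ cᴴ, φ b] : Matrix (Fin 2) (Fin 2) ℂ).PosSemidef) ↔
      ((∀ a : Matrix (Fin n) (Fin n) ℂ, a.PosSemidef → 0 ≤ φ a) ∧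
       (∀ a b : Matrix (Fin n) (Fin n) ℂ, a.PosSemidef → (b - a).PosSemidef → φ a ≤ φ b) ∧
       (∀ a : Matrix (Fin n) (Fin n) ℂ, φ aᴴ = star (φ a)) ∧
       (∀ a b : Matrix (Fin n) (Fin n) ℂ,
         ((‖φ (aᴴ * b)‖ : ℝ) : ℂ) ^ 2 ≤ φ (aᴴ * a) * φ (bᴴ * b))) := by
  constructor
  · intro H
    have hstar : ∀ a : Matrix (Fin n) (Fin n) ℂ, φ aᴴ = star (φ a) := fun a =>
      psd2_star (H _ 1 a (starBlock a))
    refine ⟨?_, ?_, hstar, ?_⟩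
    · intro a hpa
      have hb := H a 0 0 (by rw [Matrix.conjTranspose_zero]
                             exact psdDiagBlocks hpa Matrix.PosSemidef.zero)
      exact psd2_00 hb
    · intro a b hpa hba
      have h2 := H b a a (by rw [hpa.1.eq]; exact monoBlock hpa hba)
      rw [hpa.1.eq] at h2
      have h00 := psd2_00 h2
      have h11 := psd2_11 h2
      have hst := psd2_star h2
      have h2' : (!![φ b, φ a; star (φ a), φ a]).PosSemidef := by rw [← hst]; exact h2
      have habs := psd2_abs h2'
      obtain ⟨hbre, hbim⟩ := Complex.nonneg_iff.mp h00
      obtain ⟨hare, haim⟩ := Complex.nonneg_iff.mp h11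
      rw [Complex.le_def]
      refine ⟨?_, by rw [← haim, ← hbim]⟩
      have h1 := (Complex.le_def.mp habs).1
      have habs2 : (‖φ a‖^2 : ℝ) = (φ a).re^2 := by
        rw [Complex.sq_norm, Complex.normSq_apply, ← haim]; ring
      simp only [← Complex.ofReal_pow, Complex.ofReal_re, Complex.mul_re, ← haim, ← hbim,
        mul_zero, sub_zero, habs2] at h1
      rcases eq_or_lt_of_le hare with h | h
      · rw [← h]; exact hbre
      · nlinarith [h1, h]
    · intro a b
      have h2 := H (aᴴ * a) (bᴴ * b) (aᴴ * b) (schwarzBlock a b)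
      rw [hstar (aᴴ * b)] at h2
      exact psd2_abs h2
  · rintro ⟨hpos, hmono, hstar, hschwarz⟩ a b c hT
    obtain ⟨hpa, hpb, x, y, hxx, hxy, hyy, hbyy⟩ := schwarz_data hT
    have h1 := hschwarz x y
    rw [hxx, hxy] at h1
    have h2 : φ (yᴴ * y) ≤ φ b := hmono _ _ hyy hbyy
    have h3 : 0 ≤ φ a := hpos a hpa
    have h4 : ((‖φ c‖ : ℝ) : ℂ)^2 ≤ φ a * φ b :=
      le_trans h1 (mul_le_mul_of_nonneg_left h2 h3)
    rw [hstar c]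
    exact psd2_mk (hpos a hpa) (hpos b hpb) h4
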